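/- Let a > 0 and b ∈ ℝ, and set ω₋ = b/√(π·a), ω₊ = (a+b)/√(π·a), and η = b²/(2a). Then X₀(a,b) = √(π/a)·( cos(η)·(C(ω₊) − C(ω₋)) + sin(η)·(S(ω₊) − S(ω₋)) ) and Y₀(a,b) = √(π/a)·( cos(η)·(S(ω₊) − S(ω₋)) − sin(η)·(C(ω₊) − C(ω₋)) ), where C and S are the Fresnel cosine and sine integrals. -/

import Mathlib

open Real

/-- `X₀ a b = ∫₀¹ cos(a τ²/2 + b τ) dτ` -/
noncomputable def X₀ (a b : ℝ) : ℝ := ∫ τ in (0:ℝ)..1, Real.cos (a * τ ^ 2 / 2 + b * τ)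

/-- `Y₀ a b = ∫₀¹ sin(a τ²/2 + b τ) dτ` -/
noncomputable def Y₀ (a b : ℝ) : ℝ := ∫ τ in (0:ℝ)..1, Real.sin (a * τ ^ 2 / 2 + b * τ)

/-- Fresnel cosine integral `C(t) = ∫₀^t cos(π τ²/2) dτ`. -/
noncomputable def fresnelC (t : ℝ) : ℝ := ∫ τ in (0:ℝ)..t, Real.cos (π * τ ^ 2 / 2)

/-- Fresnel sine integral `S(t) = ∫₀^t sin(π τ²/2) dτ`. -/
noncomputable def fresnelS (t : ℝ) : ℝ := ∫ τ in (0:ℝ)..t, Real.sin (π * τ ^ 2 / 2)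

theorem stmt19 (a b : ℝ) (ha : 0 < a)
    (ωm ωp η : ℝ)
    (hωm : ωm = b / Real.sqrt (π * a))
    (hωp : ωp = (a + b) / Real.sqrt (π * a))
    (hη : η = b ^ 2 / (2 * a)) :
    X₀ a b = Real.sqrt (π / a) *
      (Real.cos η * (fresnelC ωp - fresnelC ωm) + Real.sin η * (fresnelS ωp - fresnelS ωm)) ∧
    Y₀ a b = Real.sqrt (π / a) *
      (Real.cos η * (fresnelS ωp - fresnelS ωm) - Real.sin η * (fresnelC ωp - fresnelC ωm)) := by
  have hπ : 0 < π := Real.pi_pos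
  set s := Real.sqrt (π * a) with hs_def
  have hs0 : 0 < s := Real.sqrt_pos.mpr (by positivity)
  have hs2 : s ^ 2 = π * a := Real.sq_sqrt (by positivity)
  set c := a / s with hc_def
  set d := b / s with hd_def
  have hc0 : c ≠ 0 := by
    simp only [hc_def]
    positivity
  -- `c⁻¹ = √(π/a)`
  have hcinv : c⁻¹ = Real.sqrt (π / a) := by
    have hA : Real.sqrt (π / a) * a = s := by
      rw [hs_def, ← Real.sqrt_sq ha.le, ← Real.sqrt_mul (by positivity)]
      congr 1
      field_simp
      ring_nf; rw [Real.sq_sqrt (sq_nonneg a)]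
    rw [hc_def, inv_div, ← hA, mul_div_assoc, div_self ha.ne', mul_one]
  -- pointwise phase identity
  have key : ∀ τ : ℝ, a * τ ^ 2 / 2 + b * τ = π * (c * τ + d) ^ 2 / 2 - η := by
    intro τ
    rw [hη, hc_def, hd_def]
    field_simp
    nlinarith [hs2, sq_nonneg τ]
  have hend0 : c * 0 + d = ωm := by rw [hωm]; ring
  have hend1 : c * 1 + d = ωp := by
    rw [hωp, hc_def, hd_def]; field_simp
  have hcosI : ∀ u v : ℝ, IntervalIntegrable (fun τ => Real.cos (π * τ ^ 2 / 2))
      MeasureTheory.volume u v := fun u v => (by fun_prop : Continuous fun τ : ℝ =>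
        Real.cos (π * τ ^ 2 / 2)).intervalIntegrable u v
  have hsinI : ∀ u v : ℝ, IntervalIntegrable (fun τ => Real.sin (π * τ ^ 2 / 2))
      MeasureTheory.volume u v := fun u v => (by fun_prop : Continuous fun τ : ℝ =>
        Real.sin (π * τ ^ 2 / 2)).intervalIntegrable u v
  have hCdiff : fresnelC ωp - fresnelC ωm = ∫ u in ωm..ωp, Real.cos (π * u ^ 2 / 2) := by
    rw [fresnelC, fresnelC, ← intervalIntegral.integral_interval_sub_left (hcosI 0 ωp) (hcosI 0 ωm)]
  have hSdiff : fresnelS ωp - fresnelS ωm = ∫ u in ωm..ωp, Real.sin (π * u ^ 2 / 2) := by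
    rw [fresnelS, fresnelS, ← intervalIntegral.integral_interval_sub_left (hsinI 0 ωp) (hsinI 0 ωm)]
  constructor
  · have h1 : X₀ a b = ∫ τ in (0:ℝ)..1, (fun u => Real.cos (π * u ^ 2 / 2 - η)) (c * τ + d) := by
      rw [X₀]
      congr 1
      ext τ
      rw [key τ]
    rw [h1, intervalIntegral.integral_comp_mul_add (fun u => Real.cos (π * u ^ 2 / 2 - η)) hc0 d,
      hend0, hend1, smul_eq_mul, hcinv, hCdiff, hSdiff]
    congr 1
    have : ∀ u : ℝ, Real.cos (π * u ^ 2 / 2 - η)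
        = Real.cos η * Real.cos (π * u ^ 2 / 2) + Real.sin η * Real.sin (π * u ^ 2 / 2) := by
      intro u; rw [Real.cos_sub]; ring
    simp only [this]
    rw [intervalIntegral.integral_add ((hcosI ωm ωp).const_mul _) ((hsinI ωm ωp).const_mul _),
      intervalIntegral.integral_const_mul, intervalIntegral.integral_const_mul]
  · have h1 : Y₀ a b = ∫ τ in (0:ℝ)..1, (fun u => Real.sin (π * u ^ 2 / 2 - η)) (c * τ + d) := by
      rw [Y₀]
      congr 1
      ext τ
      rw [key τ]
    rw [h1, intervalIntegral.integral_comp_mul_add (fun u => Real.sin (π * u ^ 2 / 2 - η)) hc0 d,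
      hend0, hend1, smul_eq_mul, hcinv, hCdiff, hSdiff]
    congr 1
    have : ∀ u : ℝ, Real.sin (π * u ^ 2 / 2 - η)
        = Real.cos η * Real.sin (π * u ^ 2 / 2) - Real.sin η * Real.cos (π * u ^ 2 / 2) := by
      intro u; rw [Real.sin_sub]; ring
    simp only [this]
    rw [intervalIntegral.integral_sub ((hsinI ωm ωp).const_mul _) ((hcosI ωm ωp).const_mul _),
      intervalIntegral.integral_const_mul, intervalIntegral.integral_const_mul]
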